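/- Let ρ, s, α be real numbers with ρ > 0, s > 0, 0 < α < π/2, and s < ρ · tan(α). Then log( (ρ·tan(α) + s) / (ρ·tan(α) − s) ) / (π − 2α) > s / ρ. -/

import Mathlib

open Real

lemma log_ratio_gt {x : ℝ} (h0 : 0 < x) (h1 : x < 1) :
    2 * x < Real.log (1 + x) - Real.log (1 - x) := by
  have hmono : StrictMonoOn (fun y : ℝ => Real.log (1 + y) - Real.log (1 - y) - 2 * y)
      (Set.Ico 0 1) := by
    apply strictMonoOn_of_deriv_pos (convex_Ico 0 1)
    · apply ContinuousOn.sub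
      apply ContinuousOn.sub
      · refine (Real.continuousOn_log.comp (by fun_prop)
          (fun y hy => ?_)).congr (fun y hy => rfl)
        simp only [Set.mem_Ico] at hy
        simp only [Set.mem_compl_iff, Set.mem_singleton_iff]
        intro h; linarith [hy.1]
      · refine (Real.continuousOn_log.comp (by fun_prop)
          (fun y hy => ?_)).congr (fun y hy => rfl)
        simp only [Set.mem_Ico] at hy
        simp only [Set.mem_compl_iff, Set.mem_singleton_iff]
        intro h; linarith [hy.2]
      · fun_prop
    · intro y hy
      rw [interior_Ico] at hy
      obtain ⟨hy0, hy1⟩ := hy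
      have h1y : (0:ℝ) < 1 + y := by linarith
      have h2y : (0:ℝ) < 1 - y := by linarith
      have d1 : HasDerivAt (fun y : ℝ => Real.log (1 + y)) (1 / (1 + y)) y := by
        have := (Real.hasDerivAt_log h1y.ne').comp y ((hasDerivAt_id y).const_add 1)
        simpa [Function.comp_def] using this
      have d2 : HasDerivAt (fun y : ℝ => Real.log (1 - y)) (-(1 / (1 - y))) y := by
        have := (Real.hasDerivAt_log h2y.ne').comp y ((hasDerivAt_id y).neg.const_add 1)
        simpa [div_eq_mul_inv, Function.comp_def] using this
      have d3 : HasDerivAt (fun y : ℝ => Real.log (1 + y) - Real.log (1 - y) - 2 * y)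
          (1 / (1 + y) - (-(1 / (1 - y))) - 2) y := by
        exact ((d1.sub d2).sub (by simpa using (hasDerivAt_id y).const_mul 2))
      rw [d3.deriv]
      have heq : 1 / (1 + y) - -(1 / (1 - y)) - 2 = 2 * y ^ 2 / ((1 + y) * (1 - y)) := by
        field_simp; ring
      rw [heq]; positivity
  have h := hmono (by constructor <;> norm_num) (by exact ⟨h0.le, h1⟩) h0
  simp only [Real.log_one, add_zero, sub_zero, mul_zero] at h
  linarith [h]

/-- The analytic content of the conformal modulus bound of Proposition 4.1. -/
theorem conformal_modulus_lower_bound (ρ s α : ℝ) (hρ : 0 < ρ) (hs : 0 < s)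
    (hα0 : 0 < α) (hα1 : α < π / 2) (hlt : s < ρ * Real.tan α) :
    Real.log ((ρ * Real.tan α + s) / (ρ * Real.tan α - s)) / (π - 2 * α)
      > s / ρ := by
  set t := ρ * Real.tan α with ht
  have htan : 0 < Real.tan α := Real.tan_pos_of_pos_of_lt_pi_div_two hα0 hα1
  have ht0 : 0 < t := by positivity
  have hst : s < t := hlt
  have hx0 : 0 < s / t := by positivity
  have hx1 : s / t < 1 := (div_lt_one ht0).mpr hst
  have hk := log_ratio_gt hx0 hx1
  have heq : (t + s) / (t - s) = (1 + s / t) / (1 - s / t) := by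
    field_simp
  have hlog : Real.log ((t + s) / (t - s)) > 2 * (s / t) := by
    rw [heq, Real.log_div (by positivity) (by
      have : 0 < 1 - s / t := by linarith
      exact this.ne')]
    linarith
  -- β = π/2 - α
  have hβ0 : 0 < π / 2 - α := by linarith
  have hβ1 : π / 2 - α < π / 2 := by linarith
  have htanβ : π / 2 - α < Real.tan (π / 2 - α) := Real.lt_tan hβ0 hβ1
  have htan_eq : Real.tan (π / 2 - α) = (Real.tan α)⁻¹ := Real.tan_pi_div_two_sub α
  have hθ : 0 < π - 2 * α := by linarith
  -- (π - 2α) * s / ρ < 2 * (s / t)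
  have hkey : (π - 2 * α) * (s / ρ) < 2 * (s / t) := by
    have h1 : π - 2 * α < 2 * (Real.tan α)⁻¹ := by
      rw [← htan_eq]; linarith
    have : 2 * (s / t) = 2 * (Real.tan α)⁻¹ * (s / ρ) := by
      rw [ht]; field_simp
    rw [this]
    have hsρ : 0 < s / ρ := by positivity
    exact (mul_lt_mul_of_pos_right h1 hsρ)
  rw [gt_iff_lt, lt_div_iff₀ hθ]
  calc s / ρ * (π - 2 * α) = (π - 2 * α) * (s / ρ) := by ring
    _ < 2 * (s / t) := hkey
    _ < Real.log ((t + s) / (t - s)) := hlog
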